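/- For the sub-gamma function ψ_{G,c}(λ) = λ²/(2(1−cλ)) on [0, 1/(c∨0)) with c ∈ ℝ: the Legendre-Fenchel transform is ψ_G*(u) = u²/(1 + cu + √(1+2cu)), the slope transform is s_G(u) = u/(1 + √(1+2cu)), and the decay transform is D_G(u) = 2u/(1+2cu). -/

import Mathlib

/-- The sub-gamma function with scale `c`: `ψ_G λ = λ²/(2(1−cλ))` on the domain
`{λ : 0 ≤ λ ∧ cλ < 1}` (which is `[0, 1/(c⊔0))`). -/
noncomputable def psiG (c l : ℝ) : ℝ := l ^ 2 / (2 * (1 - c * l))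

/-- Transforms of the sub-gamma function `ψ_{G,c}` (with `c ≥ 0`): the
Legendre-Fenchel transform is `ψ_G* u = u²/(1 + cu + √(1+2cu))`, the slope
transform `s_G u = ψ_G((ψ_G*)'(u)) / (ψ_G*)'(u) = u/(1 + √(1+2cu))`, and the
decay transform `D_G u = sup {λ ∈ dom, λ > 0 : ψ_G λ / λ ≤ u} = 2u/(1+2cu)`. -/
lemma legendre_eq (c : ℝ) (hc : 0 ≤ c) (v : ℝ) (hv : 0 < v) :
    sSup ((fun l => l * v - psiG c l) '' {l : ℝ | 0 ≤ l ∧ c * l < 1})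
      = 2 * v ^ 2 / (Real.sqrt (1 + 2 * c * v) + 1) ^ 2 := by
  set s := Real.sqrt (1 + 2 * c * v) with hsdef
  have hpos : (0:ℝ) < 1 + 2 * c * v := by nlinarith
  have hs2 : s ^ 2 = 1 + 2 * c * v := Real.sq_sqrt hpos.le
  have hs1 : 1 ≤ s := by
    have := Real.sqrt_le_sqrt (show (1:ℝ) ≤ 1 + 2 * c * v by nlinarith)
    simpa [hsdef] using this
  have hspos : 0 < s := lt_of_lt_of_le one_pos hs1
  set lam := 2 * v / (s * (s + 1)) with hlam
  have hden : s * (s + 1) ≠ 0 := by positivity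
  have hclam : 1 - c * lam = 1 / s := by
    rw [hlam]; field_simp
    linear_combination hs2
  have hmem : lam ∈ {l : ℝ | 0 ≤ l ∧ c * l < 1} := by
    constructor
    · positivity
    · nlinarith [hclam, one_div_pos.mpr hspos]
  have hval : lam * v - psiG c lam = 2 * v ^ 2 / (s + 1) ^ 2 := by
    rw [psiG, hclam, hlam]
    field_simp
    ring
  have hub : ∀ l ∈ {l : ℝ | 0 ≤ l ∧ c * l < 1},
      l * v - psiG c l ≤ 2 * v ^ 2 / (s + 1) ^ 2 := by
    rintro l ⟨hl0, hl1⟩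
    have h1 : (0:ℝ) < 2 * (1 - c * l) := by linarith
    have heq : l * v - psiG c l = (2 * l * v * (1 - c * l) - l ^ 2) / (2 * (1 - c * l)) := by
      rw [psiG, eq_div_iff h1.ne', sub_mul, div_mul_cancel₀ _ h1.ne']; ring
    rw [heq, div_le_div_iff₀ h1 (by positivity)]
    have key : 2 * v ^ 2 * (2 * (1 - c * l)) - (2 * l * v * (1 - c * l) - l ^ 2) * (s + 1) ^ 2
        = (s * (s + 1) * l - 2 * v) ^ 2 := by
      linear_combination ((-l ^ 2) * s ^ 2 - 2 * l ^ 2 * s + 2 * v * l - l ^ 2) * hs2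
    nlinarith [sq_nonneg (s * (s + 1) * l - 2 * v)]
  apply le_antisymm
  · exact csSup_le ⟨_, ⟨lam, hmem, rfl⟩⟩ (by rintro x ⟨l, hl, rfl⟩; exact hub l hl)
  · exact le_csSup ⟨2 * v ^ 2 / (s + 1) ^ 2, by rintro x ⟨l, hl, rfl⟩; exact hub l hl⟩
      ⟨lam, hmem, hval⟩

theorem gamma_transforms (c u : ℝ) (hc : 0 ≤ c) (hu : 0 < u) :
    sSup ((fun l => l * u - psiG c l) '' {l : ℝ | 0 ≤ l ∧ c * l < 1})
      = u ^ 2 / (1 + c * u + Real.sqrt (1 + 2 * c * u)) ∧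
    psiG c (deriv (fun v =>
          sSup ((fun l => l * v - psiG c l) '' {l : ℝ | 0 ≤ l ∧ c * l < 1})) u) /
        deriv (fun v =>
          sSup ((fun l => l * v - psiG c l) '' {l : ℝ | 0 ≤ l ∧ c * l < 1})) u
      = u / (1 + Real.sqrt (1 + 2 * c * u)) ∧
    sSup {l : ℝ | 0 < l ∧ c * l < 1 ∧ psiG c l / l ≤ u} = 2 * u / (1 + 2 * c * u) := by
  set s := Real.sqrt (1 + 2 * c * u) with hsdef
  have hpos : (0:ℝ) < 1 + 2 * c * u := by nlinarith
  have hs2 : s ^ 2 = 1 + 2 * c * u := Real.sq_sqrt hpos.le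
  have hs1 : 1 ≤ s := by
    have := Real.sqrt_le_sqrt (show (1:ℝ) ≤ 1 + 2 * c * u by nlinarith)
    simpa [hsdef] using this
  have hspos : 0 < s := lt_of_lt_of_le one_pos hs1
  refine ⟨?_, ?_, ?_⟩
  · rw [legendre_eq c hc u hu]
    rw [show 1 + c * u + s = (s + 1) ^ 2 / 2 by linear_combination -hs2 / 2]
    rw [div_div_eq_mul_div]
    ring
  · -- derivative part
    have heq : (fun v => sSup ((fun l => l * v - psiG c l) '' {l : ℝ | 0 ≤ l ∧ c * l < 1}))
        =ᶠ[nhds u] (fun v => 2 * v ^ 2 / (Real.sqrt (1 + 2 * c * v) + 1) ^ 2) := by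
      filter_upwards [isOpen_Ioi.mem_nhds (show u ∈ Set.Ioi (0:ℝ) from hu)] with v hv
      exact legendre_eq c hc v hv
    have hD : HasDerivAt (fun v => 2 * v ^ 2 / (Real.sqrt (1 + 2 * c * v) + 1) ^ 2)
        (2 * u / (s * (s + 1))) u := by
      have h1 : HasDerivAt (fun v : ℝ => 1 + 2 * c * v) (2 * c) u := by
        simpa using ((hasDerivAt_id u).const_mul (2 * c)).const_add 1
      have h2 : HasDerivAt (fun v : ℝ => Real.sqrt (1 + 2 * c * v))
          (2 * c / (2 * s)) u := h1.sqrt (by positivity)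
      have h3 : HasDerivAt (fun v : ℝ => (Real.sqrt (1 + 2 * c * v) + 1) ^ 2)
          (2 * (s + 1) ^ 1 * (2 * c / (2 * s))) u := (h2.add_const 1).pow 2
      have h4 : HasDerivAt (fun v : ℝ => 2 * v ^ 2) (2 * (2 * u ^ 1)) u :=
        (hasDerivAt_pow 2 u).const_mul 2
      have h5 := h4.div h3 (by positivity)
      refine h5.congr_deriv ?_
      rw [hsdef] at *
      field_simp
      linear_combination (Real.sq_sqrt (by linarith) : √(1 + 2 * u * c) ^ 2 = 1 + 2 * u * c)
    rw [heq.deriv_eq, hD.deriv]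
    set lam := 2 * u / (s * (s + 1)) with hlam
    have hden : s * (s + 1) ≠ 0 := by positivity
    have hclam : 1 - c * lam = 1 / s := by
      rw [hlam]; field_simp
      linear_combination hs2
    have hlamne : lam ≠ 0 := by rw [hlam]; positivity
    rw [psiG, hclam]
    have h6 : lam ^ 2 / (2 * (1 / s)) / lam = lam * s / 2 := by
      field_simp
    rw [h6, hlam]
    rw [show (1 : ℝ) + s = s + 1 by ring]
    field_simp
  · have hm : 0 < 2 * u / (1 + 2 * c * u) := by positivity
    have hset : {l : ℝ | 0 < l ∧ c * l < 1 ∧ psiG c l / l ≤ u}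
        = Set.Ioc 0 (2 * u / (1 + 2 * c * u)) := by
      ext l
      simp only [Set.mem_setOf_eq, Set.mem_Ioc]
      constructor
      · rintro ⟨hl0, hl1, hle⟩
        refine ⟨hl0, ?_⟩
        have h1 : (0:ℝ) < 2 * (1 - c * l) := by linarith
        have h2 : psiG c l / l = l / (2 * (1 - c * l)) := by
          rw [psiG]; field_simp
        rw [h2, div_le_iff₀ h1] at hle
        rw [le_div_iff₀ hpos]
        nlinarith
      · rintro ⟨hl0, hle⟩
        have hl1 : c * l < 1 := by
          rw [le_div_iff₀ hpos] at hle
          nlinarith [mul_le_mul_of_nonneg_left hle hc, mul_nonneg hc hl0.le]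
        refine ⟨hl0, hl1, ?_⟩
        have h1 : (0:ℝ) < 2 * (1 - c * l) := by linarith
        have h2 : psiG c l / l = l / (2 * (1 - c * l)) := by
          rw [psiG]; field_simp
        rw [h2, div_le_iff₀ h1]
        rw [le_div_iff₀ hpos] at hle
        nlinarith
    rw [hset]
    exact csSup_Ioc hm
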